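/- arXiv:1601.07827 — 9 statements merged into one kernel-verified Lean document; each statement's English description precedes it below -/
import Mathlib

section
/- Any Hom-dialgebra (D, ⊣, ⊢, α) becomes a Hom-Leibniz algebra with bracket [x,y] = x ⊣ y − y ⊢ x. -/
/-- Any Hom-dialgebra `(D, ⊣, ⊢, α)` becomes a Hom-Leibniz algebra with the bracket
`[x,y] = x ⊣ y − y ⊢ x`. -/
theorem homDialgebra_to_homLeibniz {𝕜 D : Type*} [Field 𝕜] [AddCommGroup D] [Module 𝕜 D]
    (dl dr : D →ₗ[𝕜] D →ₗ[𝕜] D) (α : D →ₗ[𝕜] D)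
    (h1 : ∀ x y z, dl (dl x y) (α z) = dl (α x) (dl y z))
    (h2 : ∀ x y z, dl (α x) (dl y z) = dl (α x) (dr y z))
    (h3 : ∀ x y z, dl (dr x y) (α z) = dr (α x) (dl y z))
    (h4 : ∀ x y z, dr (α x) (dr y z) = dr (dr x y) (α z))
    (h5 : ∀ x y z, dr (dl x y) (α z) = dr (dr x y) (α z))
    (hαl : ∀ x y, α (dl x y) = dl (α x) (α y))
    (hαr : ∀ x y, α (dr x y) = dr (α x) (α y))
    (br : D → D → D) (hbr : ∀ x y, br x y = dl x y - dr y x) :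
    (∀ x y z, br (α x) (br y z) = br (br x y) (α z) - br (br x z) (α y)) ∧
    (∀ x y, α (br x y) = br (α x) (α y)) := by
  constructor
  · intro x y z
    simp only [hbr, map_sub, LinearMap.sub_apply]
    rw [← h1 x y z, ← h2 x z y, ← h1 x z y, h5 y z x, h4 y z x, h4 z y x, h3 y x z, h3 z x y]
    abel
  · intro x y
    rw [hbr, hbr, map_sub, hαl, hαr]
end

section
/- Let (H,α_H) and (K,α_K) be two-sided Hom-ideals of a Hom-Leibniz algebra (L,α_L) with α_L surjective. Then the commutator [H,K] is a two-sided Hom-ideal of (L,α_L). -/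
/-- A multiplicative Hom-Leibniz algebra structure. -/
def IsHomLeibniz {𝕜 L : Type*} [Field 𝕜] [AddCommGroup L] [Module 𝕜 L]
    (br : L →ₗ[𝕜] L →ₗ[𝕜] L) (α : L →ₗ[𝕜] L) : Prop :=
  (∀ x y z, br (α x) (br y z) = br (br x y) (α z) - br (br x z) (α y)) ∧
  (∀ x y, α (br x y) = br (α x) (α y))

/-- Two-sided Hom-ideal of a Hom-Leibniz algebra. -/
def IsHomIdeal {𝕜 L : Type*} [Field 𝕜] [AddCommGroup L] [Module 𝕜 L]
    (br : L →ₗ[𝕜] L →ₗ[𝕜] L) (α : L →ₗ[𝕜] L) (H : Submodule 𝕜 L) : Prop :=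
  (∀ x ∈ H, α x ∈ H) ∧ (∀ x ∈ H, ∀ y : L, br x y ∈ H ∧ br y x ∈ H)

/-- The commutator of two two-sided Hom-ideals: the subspace spanned by all brackets
`[h,k]` and `[k,h]` with `h ∈ H`, `k ∈ K`. -/
def homCommutator {𝕜 L : Type*} [Field 𝕜] [AddCommGroup L] [Module 𝕜 L]
    (br : L →ₗ[𝕜] L →ₗ[𝕜] L) (H K : Submodule 𝕜 L) : Submodule 𝕜 L :=
  Submodule.span 𝕜 {z : L | ∃ h ∈ H, ∃ k ∈ K, z = br h k ∨ z = br k h}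

/-- If `α_L` is surjective, the commutator of two two-sided Hom-ideals is a two-sided
Hom-ideal. -/
theorem homCommutator_isHomIdeal_of_surjective {𝕜 L : Type*} [Field 𝕜] [AddCommGroup L]
    [Module 𝕜 L]
    (br : L →ₗ[𝕜] L →ₗ[𝕜] L) (α : L →ₗ[𝕜] L) (hL : IsHomLeibniz br α)
    (hsurj : Function.Surjective α)
    (H K : Submodule 𝕜 L) (hH : IsHomIdeal br α H) (hK : IsHomIdeal br α K) :
    IsHomIdeal br α (homCommutator br H K) := by
  obtain ⟨hLeib, hmul⟩ := hL
  set C := homCommutator br H K with hC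
  have hgen : ∀ h ∈ H, ∀ k ∈ K, br h k ∈ C ∧ br k h ∈ C := by
    intro h hh k hk
    constructor <;> exact Submodule.subset_span ⟨h, hh, k, hk, by simp⟩
  -- key property for generators
  have key : ∀ z ∈ {z : L | ∃ h ∈ H, ∃ k ∈ K, z = br h k ∨ z = br k h},
      α z ∈ C ∧ ∀ y : L, br z y ∈ C ∧ br y z ∈ C := by
    rintro z ⟨h, hh, k, hk, hz⟩
    have hαh := hH.1 h hh
    have hαk := hK.1 k hk
    have main : ∀ a ∈ H, ∀ b ∈ K, α (br a b) ∈ C ∧ ∀ y : L, br (br a b) y ∈ C ∧ br y (br a b) ∈ C := by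
      intro a ha b hb
      have hαa := hH.1 a ha
      have hαb := hK.1 b hb
      refine ⟨?_, ?_⟩
      · rw [hmul]; exact (hgen _ hαa _ hαb).1
      · intro y
        obtain ⟨y', rfl⟩ := hsurj y
        constructor
        · have : br (br a b) (α y') = br (α a) (br b y') + br (br a y') (α b) := by
            rw [hLeib a b y']; abel
          rw [this]
          exact C.add_mem (hgen _ hαa _ (hK.2 b hb y').1).1 (hgen _ (hH.2 a ha y').1 _ hαb).1
        · have : br (α y') (br a b) = br (br y' a) (α b) - br (br y' b) (α a) := hLeib y' a b
          rw [this]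
          exact C.sub_mem (hgen _ (hH.2 a ha y').2 _ hαb).1 (hgen _ hαa _ (hK.2 b hb y').2).2
    rcases hz with rfl | rfl
    · exact main h hh k hk
    · -- z = br k h : same argument with roles swapped
      have hαh := hH.1 h hh
      refine ⟨?_, ?_⟩
      · rw [hmul]; exact (hgen _ hαh _ hαk).2
      · intro y
        obtain ⟨y', rfl⟩ := hsurj y
        constructor
        · have : br (br k h) (α y') = br (α k) (br h y') + br (br k y') (α h) := by
            rw [hLeib k h y']; abel
          rw [this]
          exact C.add_mem (hgen _ (hH.2 h hh y').1 _ hαk).2 (hgen _ hαh _ (hK.2 k hk y').1).2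
        · have : br (α y') (br k h) = br (br y' k) (α h) - br (br y' h) (α k) := hLeib y' k h
          rw [this]
          exact C.sub_mem (hgen _ hαh _ (hK.2 k hk y').2).2 (hgen _ (hH.2 h hh y').2 _ hαk).1
  constructor
  · intro x hx
    refine Submodule.span_induction (p := fun x _ => α x ∈ C) (fun z hz => (key z hz).1)
      (by simp) (fun a b _ _ ha hb => by show α (a + b) ∈ C; rw [map_add]; exact C.add_mem ha hb)
      (fun c a _ ha => by show α (c • a) ∈ C; rw [map_smul]; exact C.smul_mem c ha) hx
  · intro x hx y
    refine Submodule.span_induction (p := fun x _ => br x y ∈ C ∧ br y x ∈ C)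
      (fun z hz => (key z hz).2 y)
      (by simp) ?_ ?_ hx
    · intro a b _ _ ha hb
      refine ⟨?_, ?_⟩
      · show br (a + b) y ∈ C; rw [map_add]; exact C.add_mem ha.1 hb.1
      · show br y (a + b) ∈ C; rw [map_add]; exact C.add_mem ha.2 hb.2
    · intro c a _ ha
      refine ⟨?_, ?_⟩
      · show br (c • a) y ∈ C; rw [map_smul]; exact C.smul_mem c ha.1
      · show br y (c • a) ∈ C; rw [map_smul]; exact C.smul_mem c ha.2
end

section
/- If H and K are two-sided Hom-ideals of a Hom-Leibniz algebra (L,α_L) with H, K ⊆ α_L(L), then [H,K] is a two-sided Hom-ideal of the Hom-Leibniz subalgebra (α_L(L), α_L|). -/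
/-- If `H, K ⊆ α_L(L)` are two-sided Hom-ideals of `(L,α_L)`, then `[H,K]` is a
two-sided Hom-ideal of the Hom-Leibniz subalgebra `(α_L(L), α_L|)`. -/
theorem homCommutator_isHomIdeal_of_range {𝕜 L : Type*} [Field 𝕜] [AddCommGroup L]
    [Module 𝕜 L]
    (br : L →ₗ[𝕜] L →ₗ[𝕜] L) (α : L →ₗ[𝕜] L) (hL : IsHomLeibniz br α)
    (H K : Submodule 𝕜 L) (hH : IsHomIdeal br α H) (hK : IsHomIdeal br α K)
    (hHr : H ≤ LinearMap.range α) (hKr : K ≤ LinearMap.range α) :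
    homCommutator br H K ≤ LinearMap.range α ∧
    (∀ z ∈ homCommutator br H K, α z ∈ homCommutator br H K) ∧
    ∀ z ∈ homCommutator br H K, ∀ y ∈ LinearMap.range α,
      br z y ∈ homCommutator br H K ∧ br y z ∈ homCommutator br H K := by

  obtain ⟨leib, mult⟩ := hL
  set S := homCommutator br H K with hS
  have gen : ∀ h ∈ H, ∀ k ∈ K, br h k ∈ S ∧ br k h ∈ S := by
    intro h hh k hk
    exact ⟨Submodule.subset_span ⟨h, hh, k, hk, Or.inl rfl⟩,
      Submodule.subset_span ⟨h, hh, k, hk, Or.inr rfl⟩⟩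
  refine ⟨?_, ?_, ?_⟩
  · rw [hS, homCommutator, Submodule.span_le]
    rintro z ⟨h, hh, k, hk, hz | hz⟩
    · obtain ⟨h', rfl⟩ := hHr hh
      obtain ⟨k', rfl⟩ := hKr hk
      exact ⟨br h' k', by rw [mult, hz]⟩
    · obtain ⟨h', rfl⟩ := hHr hh
      obtain ⟨k', rfl⟩ := hKr hk
      exact ⟨br k' h', by rw [mult, hz]⟩
  · intro z hz
    induction hz using Submodule.span_induction with
    | mem x hx =>
      obtain ⟨h, hh, k, hk, rfl | rfl⟩ := hx
      · rw [mult]; exact (gen _ (hH.1 h hh) _ (hK.1 k hk)).1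
      · rw [mult]; exact (gen _ (hH.1 h hh) _ (hK.1 k hk)).2
    | zero => rw [map_zero]; exact S.zero_mem
    | add x y _ _ hx hy => rw [map_add]; exact S.add_mem hx hy
    | smul c x _ hx => rw [map_smul]; exact S.smul_mem c hx
  · intro z hz y hy
    obtain ⟨y', rfl⟩ := hy
    induction hz using Submodule.span_induction with
    | mem x hx =>
      obtain ⟨h, hh, k, hk, rfl | rfl⟩ := hx
      · constructor
        · obtain ⟨h', hh'⟩ := hHr hh
          have key : br (br h k) (α y') = br (α h) (br k y') + br (br h y') (α k) := by
            have e := leib (α h') k y'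
            rw [hh'] at e
            linear_combination (norm := module) -e
          rw [key]
          exact S.add_mem (gen _ (hH.1 h hh) _ ((hK.2 k hk y').1)).1
            (gen _ ((hH.2 h hh y').1) _ (hK.1 k hk)).1
        · have e := leib y' h k
          rw [e]
          exact S.sub_mem (gen _ ((hH.2 h hh y').2) _ (hK.1 k hk)).1
            (gen _ (hH.1 h hh) _ ((hK.2 k hk y').2)).2
      · constructor
        · obtain ⟨k', hk'⟩ := hKr hk
          have key : br (br k h) (α y') = br (α k) (br h y') + br (br k y') (α h) := by
            have e := leib (α k') h y'
            rw [hk'] at e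
            linear_combination (norm := module) -e
          rw [key]
          exact S.add_mem (gen _ ((hH.2 h hh y').1) _ (hK.1 k hk)).2
            (gen _ (hH.1 h hh) _ ((hK.2 k hk y').1)).2
        · have e := leib y' k h
          rw [e]
          exact S.sub_mem (gen _ (hH.1 h hh) _ ((hK.2 k hk y').2)).2
            (gen _ ((hH.2 h hh y').2) _ (hK.1 k hk)).1
    | zero =>
      constructor
      · rw [map_zero, LinearMap.zero_apply]; exact S.zero_mem
      · rw [map_zero]; exact S.zero_mem
    | add x w _ _ hx hw =>
      constructor
      · rw [map_add, LinearMap.add_apply]; exact S.add_mem hx.1 hw.1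
      · rw [map_add]; exact S.add_mem hx.2 hw.2
    | smul c x _ hx =>
      constructor
      · rw [map_smul, LinearMap.smul_apply]; exact S.smul_mem c hx.1
      · rw [map_smul]; exact S.smul_mem c hx.2
end

section
/- Let (M,α_M) and (L,α_L) be Hom-Leibniz algebras with a Hom-Leibniz action of (L,α_L) on (M,α_M). Then the semi-direct product M ⋊ L, with underlying space M ⊕ L, endomorphism (m,l) ↦ (α_M(m), α_L(l)), and bracket [(m₁,l₁),(m₂,l₂)] = ([m₁,m₂] + ^{α_L(l₁)}m₂ + m₁^{α_L(l₂)}, [l₁,l₂]), is a multiplicative Hom-Leibniz algebra. -/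
/-- A Hom-Leibniz action of `(L,α_L)` on `(M,α_M)`, with left action `l x m = ^x m` and
right action `r m x = m^x` (axioms (a)–(h) of Definition 2.9). -/
def IsHomLeibnizAction {𝕜 L M : Type*} [Field 𝕜] [AddCommGroup L] [Module 𝕜 L]
    [AddCommGroup M] [Module 𝕜 M]
    (brL : L →ₗ[𝕜] L →ₗ[𝕜] L) (αL : L →ₗ[𝕜] L)
    (brM : M →ₗ[𝕜] M →ₗ[𝕜] M) (αM : M →ₗ[𝕜] M)
    (l : L →ₗ[𝕜] M →ₗ[𝕜] M) (r : M →ₗ[𝕜] L →ₗ[𝕜] M) : Prop :=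
  (∀ x y m, r (αM m) (brL x y) = r (r m x) (αL y) - r (r m y) (αL x)) ∧
  (∀ x y m, l (brL x y) (αM m) = r (l x m) (αL y) - l (αL x) (r m y)) ∧
  (∀ x y m, l (αL x) (l y m) = - l (αL x) (r m y)) ∧
  (∀ x m m', l (αL x) (brM m m') = brM (l x m) (αM m') - brM (l x m') (αM m)) ∧
  (∀ x m m', r (brM m m') (αL x) = brM (r m x) (αM m') + brM (αM m) (r m' x)) ∧
  (∀ x m m', brM (αM m) (l x m') = - brM (αM m) (r m' x)) ∧
  (∀ x m, αM (l x m) = l (αL x) (αM m)) ∧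
  (∀ x m, αM (r m x) = r (αM m) (αL x))

/-- The semi-direct product of Hom-Leibniz algebras: given a Hom-Leibniz action of
`(L,α_L)` on `(M,α_M)`, the space `M ⊕ L` with bracket
`[(m₁,l₁),(m₂,l₂)] = ([m₁,m₂] + ^{α_L l₁}m₂ + m₁^{α_L l₂}, [l₁,l₂])` and endomorphism
`(m,l) ↦ (α_M m, α_L l)` is a multiplicative Hom-Leibniz algebra (the bracket is
bilinear, satisfies the Hom-Leibniz identity and the endomorphism preserves it). -/
theorem semidirect_product_isHomLeibniz {𝕜 L M : Type*} [Field 𝕜]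
    [AddCommGroup L] [Module 𝕜 L] [AddCommGroup M] [Module 𝕜 M]
    (brL : L →ₗ[𝕜] L →ₗ[𝕜] L) (αL : L →ₗ[𝕜] L) (hLb : IsHomLeibniz brL αL)
    (brM : M →ₗ[𝕜] M →ₗ[𝕜] M) (αM : M →ₗ[𝕜] M) (hMb : IsHomLeibniz brM αM)
    (l : L →ₗ[𝕜] M →ₗ[𝕜] M) (r : M →ₗ[𝕜] L →ₗ[𝕜] M)
    (hact : IsHomLeibnizAction brL αL brM αM l r)
    (sdbr : (M × L) → (M × L) → (M × L))
    (hsdbr : ∀ p q : M × L,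
      sdbr p q = (brM p.1 q.1 + l (αL p.2) q.1 + r p.1 (αL q.2), brL p.2 q.2))
    (αsd : (M × L) → (M × L)) (hαsd : ∀ p : M × L, αsd p = (αM p.1, αL p.2)) :
    (∀ p p' q : M × L, sdbr (p + p') q = sdbr p q + sdbr p' q) ∧
    (∀ p q q' : M × L, sdbr p (q + q') = sdbr p q + sdbr p q') ∧
    (∀ (c : 𝕜) (p q : M × L), sdbr (c • p) q = c • sdbr p q) ∧
    (∀ (c : 𝕜) (p q : M × L), sdbr p (c • q) = c • sdbr p q) ∧
    (∀ p q s : M × L, sdbr (αsd p) (sdbr q s) = sdbr (sdbr p q) (αsd s) - sdbr (sdbr p s) (αsd q)) ∧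
    (∀ p q : M × L, αsd (sdbr p q) = sdbr (αsd p) (αsd q)) := by
  obtain ⟨hL1, hL2⟩ := hLb
  obtain ⟨hM1, hM2⟩ := hMb
  obtain ⟨h1, h2, h3, h4, h5, h6, h7, h8⟩ := hact
  refine ⟨?_, ?_, ?_, ?_, ?_, ?_⟩
  · intro p p' q
    simp [hsdbr, Prod.ext_iff, map_add, LinearMap.add_apply]
    abel
  · intro p q q'
    simp [hsdbr, Prod.ext_iff, map_add, LinearMap.add_apply]
    abel
  · intro c p q
    simp [hsdbr, Prod.ext_iff, map_smul, LinearMap.smul_apply, smul_add]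
  · intro c p q
    simp [hsdbr, Prod.ext_iff, map_smul, LinearMap.smul_apply, smul_add]
  · intro p q s
    refine Prod.ext ?_ ?_
    · simp only [hsdbr, hαsd, Prod.fst_sub, map_add, LinearMap.add_apply,
        hM1, hL2, h1, h2, h3, h4, h5, h6]
      abel
    · simp only [hsdbr, hαsd, Prod.snd_sub]
      exact hL1 _ _ _
  · intro p q
    refine Prod.ext ?_ ?_
    · simp only [hsdbr, hαsd, map_add, LinearMap.add_apply, hM2, h7, h8]
    · simp only [hsdbr, hαsd]
      exact hL2 _ _
end

section
/- Let 0 → (M,α_M) → (K,α_K) → (L,α_L) → 0 be a split short exact sequence of Hom-Leibniz algebras with splitting s satisfying π∘s = id_L. Then ^x m := i^{-1}[s(x), i(m)] and m^x := i^{-1}[i(m), s(x)] define a Hom-Leibniz action of (L,α_L) on (M,α_M). -/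
/-- A split short exact sequence `0 → (M,α_M) →ⁱ (K,α_K) →^π (L,α_L) → 0` of Hom-Leibniz
algebras with splitting `s` induces a Hom-Leibniz action of `(L,α_L)` on `(M,α_M)` by
`^x m = i⁻¹[s x, i m]` and `m^x = i⁻¹[i m, s x]`. -/
theorem split_exact_induces_action {𝕜 L M A : Type*} [Field 𝕜]
    [AddCommGroup L] [Module 𝕜 L] [AddCommGroup M] [Module 𝕜 M]
    [AddCommGroup A] [Module 𝕜 A]
    (brL : L →ₗ[𝕜] L →ₗ[𝕜] L) (αL : L →ₗ[𝕜] L) (hLb : IsHomLeibniz brL αL)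
    (brM : M →ₗ[𝕜] M →ₗ[𝕜] M) (αM : M →ₗ[𝕜] M) (hMb : IsHomLeibniz brM αM)
    (brA : A →ₗ[𝕜] A →ₗ[𝕜] A) (αA : A →ₗ[𝕜] A) (hAb : IsHomLeibniz brA αA)
    (i : M →ₗ[𝕜] A) (hibr : ∀ m m', i (brM m m') = brA (i m) (i m'))
    (hiα : ∀ m, i (αM m) = αA (i m)) (hiinj : Function.Injective i)
    (π : A →ₗ[𝕜] L) (hπbr : ∀ a b, π (brA a b) = brL (π a) (π b))
    (hπα : ∀ a, π (αA a) = αL (π a)) (hπsurj : Function.Surjective π)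
    (hexact : LinearMap.range i = LinearMap.ker π)
    (s : L →ₗ[𝕜] A) (hsbr : ∀ x y, s (brL x y) = brA (s x) (s y))
    (hsα : ∀ x, s (αL x) = αA (s x)) (hsplit : ∀ x, π (s x) = x) :
    ∃ (l : L →ₗ[𝕜] M →ₗ[𝕜] M) (r : M →ₗ[𝕜] L →ₗ[𝕜] M),
      (∀ x m, i (l x m) = brA (s x) (i m)) ∧
      (∀ x m, i (r m x) = brA (i m) (s x)) ∧
      IsHomLeibnizAction brL αL brM αM l r := by

  have hπi : ∀ m : M, π (i m) = 0 := by
    intro m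
    have : i m ∈ LinearMap.ker π := by rw [← hexact]; exact ⟨m, rfl⟩
    exact this
  have key : ∀ a : A, π a = 0 → ∃ m, i m = a := by
    intro a ha
    have : a ∈ LinearMap.ker π := ha
    rw [← hexact] at this
    exact this
  have hker : ∀ (x : L) (m : M), π (brA (s x) (i m)) = 0 := by
    intro x m; rw [hπbr, hπi]; simp
  have hker' : ∀ (x : L) (m : M), π (brA (i m) (s x)) = 0 := by
    intro x m; rw [hπbr, hπi]; simp
  choose l0 hl0 using fun x m => key _ (hker x m)
  choose r0 hr0 using fun x m => key _ (hker' x m)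
  have anti : ∀ a b c : A, brA (αA a) (brA b c) = - brA (αA a) (brA c b) := by
    intro a b c
    rw [hAb.1 a b c, hAb.1 a c b]; abel
  refine ⟨LinearMap.mk₂ 𝕜 l0 ?_ ?_ ?_ ?_, LinearMap.mk₂ 𝕜 (fun m x => r0 x m) ?_ ?_ ?_ ?_,
    ?_, ?_, ?_, ?_, ?_, ?_, ?_, ?_, ?_, ?_⟩
  · intro x y m; apply hiinj; simp [hl0, map_add]
  · intro c x m; apply hiinj; simp [hl0, map_smul]
  · intro x m n; apply hiinj; simp [hl0, map_add]
  · intro c x m; apply hiinj; simp [hl0, map_smul]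
  · intro m n x; apply hiinj; simp [hr0, map_add]
  · intro c m x; apply hiinj; simp [hr0, map_smul]
  · intro m x y; apply hiinj; simp [hr0, map_add]
  · intro c m x; apply hiinj; simp [hr0, map_smul]
  · intro x m; exact hl0 x m
  · intro x m; exact hr0 x m
  -- (a)
  · intro x y m; apply hiinj
    simp only [LinearMap.mk₂_apply, map_sub, hr0, hiα, hsbr, hsα]
    exact hAb.1 (i m) (s x) (s y)
  -- (b)
  · intro x y m; apply hiinj
    simp only [LinearMap.mk₂_apply, map_sub, hl0, hr0, hiα, hsbr, hsα]
    have h := hAb.1 (s x) (s y) (i m)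
    rw [anti (s x) (s y) (i m)] at h
    rw [← eq_sub_iff_add_eq.mp h]
    abel
  -- (c)
  · intro x y m; apply hiinj
    simp only [LinearMap.mk₂_apply, map_neg, hl0, hr0, hsα]
    exact anti (s x) (s y) (i m)
  -- (d)
  · intro x m m'; apply hiinj
    simp only [LinearMap.mk₂_apply, map_sub, hl0, hibr, hiα, hsα]
    exact hAb.1 (s x) (i m) (i m')
  -- (e)
  · intro x m m'; apply hiinj
    simp only [LinearMap.mk₂_apply, map_add, hr0, hibr, hiα, hsα]
    have h := hAb.1 (i m) (i m') (s x)
    rw [eq_sub_iff_add_eq] at h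
    rw [← h]; abel
  -- (f)
  · intro x m m'; apply hiinj
    simp only [LinearMap.mk₂_apply, map_neg, hl0, hr0, hibr, hiα]
    exact anti (i m) (s x) (i m')
  -- (g)
  · intro x m; apply hiinj
    simp only [LinearMap.mk₂_apply, hl0, hiα, hsα]
    exact hAb.2 (s x) (i m)
  -- (h)
  · intro x m; apply hiinj
    simp only [LinearMap.mk₂_apply, hr0, hiα, hsα]
    exact hAb.2 (i m) (s x)
end

section
/- For a Hom-Leibniz algebra (L,α_L) and a trivial Hom-co-representation (M,α_M) (i.e. m^x = ^x m = 0 for all m,x), the first homology HL₁^α(L,M) of the chain complex (M ⊗ L^{⊗•}, d_•) is isomorphic to (M ⊗ L)/(α_M(M) ⊗ [L,L]). In particular, HL₁^α(L,𝕂) ≅ L/[L,L]. -/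
open TensorProduct

/-- For a trivial Hom-co-representation `(M,α_M)` of a Hom-Leibniz algebra `(L,α_L)`,
the first homology of the Hom-Leibniz chain complex is isomorphic to
`(M ⊗ L)/(α_M(M) ⊗ [L,L])`. -/
theorem homLeibniz_first_homology_trivial_coeffs {𝕜 L M : Type*} [Field 𝕜]
    [AddCommGroup L] [Module 𝕜 L] [AddCommGroup M] [Module 𝕜 M]
    (br : L →ₗ[𝕜] L →ₗ[𝕜] L) (α : L →ₗ[𝕜] L) (hL : IsHomLeibniz br α)
    (αM : M →ₗ[𝕜] M)
    (d1 : M ⊗[𝕜] L →ₗ[𝕜] M)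
    (hd1 : ∀ (m : M) (x : L), d1 (m ⊗ₜ x) = 0)
    (d2 : M ⊗[𝕜] (L ⊗[𝕜] L) →ₗ[𝕜] M ⊗[𝕜] L)
    (hd2 : ∀ (m : M) (x₁ x₂ : L), d2 (m ⊗ₜ (x₁ ⊗ₜ x₂)) = - (αM m ⊗ₜ br x₁ x₂)) :
    Nonempty
      ((↥(LinearMap.ker d1) ⧸
          (LinearMap.range d2).comap (LinearMap.ker d1).subtype) ≃ₗ[𝕜]
        ((M ⊗[𝕜] L) ⧸
          Submodule.span 𝕜 {t : M ⊗[𝕜] L | ∃ (m : M) (x y : L), t = αM m ⊗ₜ br x y})) := by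
  have hd1' : d1 = 0 := by
    ext m x
    simp [hd1]
  have hker : LinearMap.ker d1 = ⊤ := by rw [hd1']; exact LinearMap.ker_zero
  have hrange : LinearMap.range d2 =
      Submodule.span 𝕜 {t : M ⊗[𝕜] L | ∃ (m : M) (x y : L), t = αM m ⊗ₜ br x y} := by
    apply le_antisymm
    · rintro t ⟨s, rfl⟩
      induction s using TensorProduct.induction_on with
      | zero => simp
      | tmul m xy =>
        induction xy using TensorProduct.induction_on with
        | zero => simp
        | tmul x y =>
          rw [hd2]
          exact Submodule.neg_mem _ (Submodule.subset_span ⟨m, x, y, rfl⟩)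
        | add a b ha hb =>
          rw [tmul_add, map_add]
          exact Submodule.add_mem _ ha hb
      | add a b ha hb =>
        rw [map_add]
        exact Submodule.add_mem _ ha hb
    · rw [Submodule.span_le]
      rintro t ⟨m, x, y, rfl⟩
      exact ⟨-(m ⊗ₜ (x ⊗ₜ y)), by rw [map_neg, hd2, neg_neg]⟩
  let e : ↥(LinearMap.ker d1) ≃ₗ[𝕜] M ⊗[𝕜] L := LinearEquiv.ofTop _ hker
  refine ⟨Submodule.Quotient.equiv _ _ e ?_⟩
  rw [← hrange]
  ext t
  constructor
  · rintro ⟨⟨s, hs⟩, hmem, rfl⟩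
    exact hmem
  · intro ht
    exact ⟨⟨t, hker ▸ trivial⟩, ht, rfl⟩
end

section
/- Let (M,α_M) and (N,α_N) be Hom-Leibniz algebras acting compatibly on each other. Then the maps ψ₁: M∗N → M defined by ψ₁(m∗n) = m^n, ψ₁(n∗m) = ^n m, and ψ₂: M∗N → N defined by ψ₂(m∗n) = ^m n, ψ₂(n∗m) = n^m, are homomorphisms of Hom-Leibniz algebras. -/
section Tensor

variable {𝕜 M N : Type*} [Field 𝕜] [AddCommGroup M] [Module 𝕜 M]
  [AddCommGroup N] [Module 𝕜 N]

/-- The generator `m ∗ n` in the free module on symbols. -/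
noncomputable def g1 (𝕜 : Type*) [Field 𝕜] {M N : Type*} [AddCommGroup M] [Module 𝕜 M]
    [AddCommGroup N] [Module 𝕜 N] (m : M) (n : N) : ((M × N) ⊕ (N × M)) →₀ 𝕜 :=
  Finsupp.single (Sum.inl (m, n)) 1

/-- The generator `n ∗ m` in the free module on symbols. -/
noncomputable def g2 (𝕜 : Type*) [Field 𝕜] {M N : Type*} [AddCommGroup M] [Module 𝕜 M]
    [AddCommGroup N] [Module 𝕜 N] (n : N) (m : M) : ((M × N) ⊕ (N × M)) →₀ 𝕜 :=
  Finsupp.single (Sum.inr (n, m)) 1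

/-- The defining relations of the non-abelian Hom-Leibniz tensor product `M ∗ N`:
bilinearity of `∗` in each variable, and the structural relations (1) of the paper.
Here `ml m n = ^m n`, `mr n m = n^m` (action of `M` on `N`) and `nl n m = ^n m`,
`nr m n = m^n` (action of `N` on `M`). -/
def tensorRel (brM : M →ₗ[𝕜] M →ₗ[𝕜] M) (brN : N →ₗ[𝕜] N →ₗ[𝕜] N)
    (αM : M →ₗ[𝕜] M) (αN : N →ₗ[𝕜] N)
    (ml : M →ₗ[𝕜] N →ₗ[𝕜] N) (mr : N →ₗ[𝕜] M →ₗ[𝕜] N)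
    (nl : N →ₗ[𝕜] M →ₗ[𝕜] M) (nr : M →ₗ[𝕜] N →ₗ[𝕜] M) :
    Set (((M × N) ⊕ (N × M)) →₀ 𝕜) :=
  {z |
    (∃ (c : 𝕜) (m : M) (n : N), z = g1 𝕜 (c • m) n - c • g1 𝕜 m n) ∨
    (∃ (c : 𝕜) (m : M) (n : N), z = g1 𝕜 m (c • n) - c • g1 𝕜 m n) ∨
    (∃ (c : 𝕜) (n : N) (m : M), z = g2 𝕜 (c • n) m - c • g2 𝕜 n m) ∨
    (∃ (c : 𝕜) (n : N) (m : M), z = g2 𝕜 n (c • m) - c • g2 𝕜 n m) ∨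
    (∃ (m m' : M) (n : N), z = g1 𝕜 (m + m') n - g1 𝕜 m n - g1 𝕜 m' n) ∨
    (∃ (m : M) (n n' : N), z = g1 𝕜 m (n + n') - g1 𝕜 m n - g1 𝕜 m n') ∨
    (∃ (n n' : N) (m : M), z = g2 𝕜 (n + n') m - g2 𝕜 n m - g2 𝕜 n' m) ∨
    (∃ (n : N) (m m' : M), z = g2 𝕜 n (m + m') - g2 𝕜 n m - g2 𝕜 n m') ∨
    (∃ (m : M) (n n' : N),
      z = g1 𝕜 (αM m) (brN n n') - g1 𝕜 (nr m n) (αN n') + g1 𝕜 (nr m n') (αN n)) ∨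
    (∃ (n : N) (m m' : M),
      z = g2 𝕜 (αN n) (brM m m') - g2 𝕜 (mr n m) (αM m') + g2 𝕜 (mr n m') (αM m)) ∨
    (∃ (m m' : M) (n : N),
      z = g1 𝕜 (brM m m') (αN n) - g2 𝕜 (ml m n) (αM m') + g1 𝕜 (αM m) (mr n m')) ∨
    (∃ (n n' : N) (m : M),
      z = g2 𝕜 (brN n n') (αM m) - g1 𝕜 (nl n m) (αN n') + g2 𝕜 (αN n) (nr m n')) ∨
    (∃ (m m' : M) (n : N), z = g1 𝕜 (αM m) (ml m' n) + g1 𝕜 (αM m) (mr n m')) ∨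
    (∃ (n n' : N) (m : M), z = g2 𝕜 (αN n) (nl n' m) + g2 𝕜 (αN n) (nr m n')) ∨
    (∃ (m m' : M) (n n' : N), z = g1 𝕜 (nr m n) (ml m' n') - g2 𝕜 (ml m n) (nr m' n')) ∨
    (∃ (m m' : M) (n n' : N), z = g1 𝕜 (nr m n) (mr n' m') - g2 𝕜 (ml m n) (nl n' m')) ∨
    (∃ (m m' : M) (n n' : N), z = g1 𝕜 (nl n m) (ml m' n') - g2 𝕜 (mr n m) (nr m' n')) ∨
    (∃ (m m' : M) (n n' : N), z = g1 𝕜 (nl n m) (mr n' m') - g2 𝕜 (mr n m) (nl n' m'))}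

/-- The underlying vector space of the non-abelian Hom-Leibniz tensor product `M ∗ N`. -/
abbrev HomTensor (brM : M →ₗ[𝕜] M →ₗ[𝕜] M) (brN : N →ₗ[𝕜] N →ₗ[𝕜] N)
    (αM : M →ₗ[𝕜] M) (αN : N →ₗ[𝕜] N)
    (ml : M →ₗ[𝕜] N →ₗ[𝕜] N) (mr : N →ₗ[𝕜] M →ₗ[𝕜] N)
    (nl : N →ₗ[𝕜] M →ₗ[𝕜] M) (nr : M →ₗ[𝕜] N →ₗ[𝕜] M) : Type _ :=
  (((M × N) ⊕ (N × M)) →₀ 𝕜) ⧸ Submodule.span 𝕜 (tensorRel brM brN αM αN ml mr nl nr)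

/-- The class of the generator `m ∗ n` in `M ∗ N`. -/
noncomputable def t1 (brM : M →ₗ[𝕜] M →ₗ[𝕜] M) (brN : N →ₗ[𝕜] N →ₗ[𝕜] N)
    (αM : M →ₗ[𝕜] M) (αN : N →ₗ[𝕜] N)
    (ml : M →ₗ[𝕜] N →ₗ[𝕜] N) (mr : N →ₗ[𝕜] M →ₗ[𝕜] N)
    (nl : N →ₗ[𝕜] M →ₗ[𝕜] M) (nr : M →ₗ[𝕜] N →ₗ[𝕜] M)
    (m : M) (n : N) : HomTensor brM brN αM αN ml mr nl nr :=
  Submodule.Quotient.mk (g1 𝕜 m n)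

/-- The class of the generator `n ∗ m` in `M ∗ N`. -/
noncomputable def t2 (brM : M →ₗ[𝕜] M →ₗ[𝕜] M) (brN : N →ₗ[𝕜] N →ₗ[𝕜] N)
    (αM : M →ₗ[𝕜] M) (αN : N →ₗ[𝕜] N)
    (ml : M →ₗ[𝕜] N →ₗ[𝕜] N) (mr : N →ₗ[𝕜] M →ₗ[𝕜] N)
    (nl : N →ₗ[𝕜] M →ₗ[𝕜] M) (nr : M →ₗ[𝕜] N →ₗ[𝕜] M)
    (n : N) (m : M) : HomTensor brM brN αM αN ml mr nl nr :=
  Submodule.Quotient.mk (g2 𝕜 n m)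

/-- Compatibility of mutual Hom-Leibniz actions of `(M,α_M)` and `(N,α_N)`. -/
def CompatibleActions (brM : M →ₗ[𝕜] M →ₗ[𝕜] M) (brN : N →ₗ[𝕜] N →ₗ[𝕜] N)
    (ml : M →ₗ[𝕜] N →ₗ[𝕜] N) (mr : N →ₗ[𝕜] M →ₗ[𝕜] N)
    (nl : N →ₗ[𝕜] M →ₗ[𝕜] M) (nr : M →ₗ[𝕜] N →ₗ[𝕜] M) : Prop :=
  (∀ (m m' : M) (n : N), nl (ml m n) m' = brM (nr m n) m') ∧
  (∀ (m m' : M) (n : N), nl (mr n m) m' = brM (nl n m) m') ∧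
  (∀ (m m' : M) (n : N), nr m (ml m' n) = brM m (nr m' n)) ∧
  (∀ (m m' : M) (n : N), nr m (mr n m') = brM m (nl n m')) ∧
  (∀ (n n' : N) (m : M), ml (nl n m) n' = brN (mr n m) n') ∧
  (∀ (n n' : N) (m : M), ml (nr m n) n' = brN (ml m n) n') ∧
  (∀ (n n' : N) (m : M), mr n (nl n' m) = brN n (mr n' m)) ∧
  (∀ (n n' : N) (m : M), mr n (nr m n') = brN n (ml m n'))

end Tensor
section Aux

variable {𝕜 M N X : Type*} [Field 𝕜] [AddCommGroup M] [Module 𝕜 M]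
  [AddCommGroup N] [Module 𝕜 N] [AddCommGroup X] [Module 𝕜 X]
  (brM : M →ₗ[𝕜] M →ₗ[𝕜] M) (brN : N →ₗ[𝕜] N →ₗ[𝕜] N)
  (αM : M →ₗ[𝕜] M) (αN : N →ₗ[𝕜] N)
  (ml : M →ₗ[𝕜] N →ₗ[𝕜] N) (mr : N →ₗ[𝕜] M →ₗ[𝕜] N)
  (nl : N →ₗ[𝕜] M →ₗ[𝕜] M) (nr : M →ₗ[𝕜] N →ₗ[𝕜] M)

/-- Two linear maps out of the tensor product agreeing on generators are equal. -/
theorem homTensor_ext (F G : HomTensor brM brN αM αN ml mr nl nr →ₗ[𝕜] X)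
    (h1 : ∀ m n, F (t1 brM brN αM αN ml mr nl nr m n) = G (t1 brM brN αM αN ml mr nl nr m n))
    (h2 : ∀ n m, F (t2 brM brN αM αN ml mr nl nr n m) = G (t2 brM brN αM αN ml mr nl nr n m)) :
    F = G := by
  apply Submodule.linearMap_qext
  apply Finsupp.lhom_ext
  rintro (⟨m, n⟩ | ⟨n, m⟩) c
  · have e : (Finsupp.single (Sum.inl (m, n) : (M × N) ⊕ (N × M)) c : _ →₀ 𝕜)
        = c • Finsupp.single (Sum.inl (m, n)) 1 := by
      rw [Finsupp.smul_single', mul_one]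
    simp only [LinearMap.comp_apply, e, map_smul, Submodule.mkQ_apply]
    exact congrArg (c • ·) (h1 m n)
  · have e : (Finsupp.single (Sum.inr (n, m) : (M × N) ⊕ (N × M)) c : _ →₀ 𝕜)
        = c • Finsupp.single (Sum.inr (n, m)) 1 := by
      rw [Finsupp.smul_single', mul_one]
    simp only [LinearMap.comp_apply, e, map_smul, Submodule.mkQ_apply]
    exact congrArg (c • ·) (h2 n m)

/-- Lifting a pair of bilinear maps annihilating the structural relations to the tensor. -/
theorem homTensor_lift (f1 : M →ₗ[𝕜] N →ₗ[𝕜] X) (f2 : N →ₗ[𝕜] M →ₗ[𝕜] X)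
    (h9 : ∀ (m : M) (n n' : N),
      f1 (αM m) (brN n n') - f1 (nr m n) (αN n') + f1 (nr m n') (αN n) = 0)
    (h10 : ∀ (n : N) (m m' : M),
      f2 (αN n) (brM m m') - f2 (mr n m) (αM m') + f2 (mr n m') (αM m) = 0)
    (h11 : ∀ (m m' : M) (n : N),
      f1 (brM m m') (αN n) - f2 (ml m n) (αM m') + f1 (αM m) (mr n m') = 0)
    (h12 : ∀ (n n' : N) (m : M),
      f2 (brN n n') (αM m) - f1 (nl n m) (αN n') + f2 (αN n) (nr m n') = 0)
    (h13 : ∀ (m m' : M) (n : N), f1 (αM m) (ml m' n) + f1 (αM m) (mr n m') = 0)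
    (h14 : ∀ (n n' : N) (m : M), f2 (αN n) (nl n' m) + f2 (αN n) (nr m n') = 0)
    (h15 : ∀ (m m' : M) (n n' : N), f1 (nr m n) (ml m' n') = f2 (ml m n) (nr m' n'))
    (h16 : ∀ (m m' : M) (n n' : N), f1 (nr m n) (mr n' m') = f2 (ml m n) (nl n' m'))
    (h17 : ∀ (m m' : M) (n n' : N), f1 (nl n m) (ml m' n') = f2 (mr n m) (nr m' n'))
    (h18 : ∀ (m m' : M) (n n' : N), f1 (nl n m) (mr n' m') = f2 (mr n m) (nl n' m')) :
    ∃ ψ : HomTensor brM brN αM αN ml mr nl nr →ₗ[𝕜] X,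
      (∀ m n, ψ (t1 brM brN αM αN ml mr nl nr m n) = f1 m n) ∧
      (∀ n m, ψ (t2 brM brN αM αN ml mr nl nr n m) = f2 n m) := by
  set φ : (((M × N) ⊕ (N × M)) →₀ 𝕜) →ₗ[𝕜] X :=
    Finsupp.linearCombination 𝕜 (Sum.elim (fun p => f1 p.1 p.2) (fun p => f2 p.1 p.2)) with hφ
  have hg1 : ∀ (m : M) (n : N), φ (g1 𝕜 m n) = f1 m n := by
    intro m n; simp [hφ, g1, Finsupp.linearCombination_single]
  have hg2 : ∀ (n : N) (m : M), φ (g2 𝕜 n m) = f2 n m := by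
    intro n m; simp [hφ, g2, Finsupp.linearCombination_single]
  have hker : Submodule.span 𝕜 (tensorRel brM brN αM αN ml mr nl nr) ≤ LinearMap.ker φ := by
    rw [Submodule.span_le]
    rintro z (⟨c,m,n,rfl⟩|⟨c,m,n,rfl⟩|⟨c,n,m,rfl⟩|⟨c,n,m,rfl⟩|⟨m,m',n,rfl⟩|⟨m,n,n',rfl⟩|
      ⟨n,n',m,rfl⟩|⟨n,m,m',rfl⟩|⟨m,n,n',rfl⟩|⟨n,m,m',rfl⟩|⟨m,m',n,rfl⟩|⟨n,n',m,rfl⟩|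
      ⟨m,m',n,rfl⟩|⟨n,n',m,rfl⟩|⟨m,m',n,n',rfl⟩|⟨m,m',n,n',rfl⟩|⟨m,m',n,n',rfl⟩|⟨m,m',n,n',rfl⟩)
    · simp only [SetLike.mem_coe, LinearMap.mem_ker, map_sub, map_add, map_smul, hg1, hg2,
        LinearMap.smul_apply, LinearMap.add_apply, LinearMap.sub_apply]
      abel
    · simp only [SetLike.mem_coe, LinearMap.mem_ker, map_sub, map_add, map_smul, hg1, hg2,
        LinearMap.smul_apply, LinearMap.add_apply, LinearMap.sub_apply]
      abel
    · simp only [SetLike.mem_coe, LinearMap.mem_ker, map_sub, map_add, map_smul, hg1, hg2,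
        LinearMap.smul_apply, LinearMap.add_apply, LinearMap.sub_apply]
      abel
    · simp only [SetLike.mem_coe, LinearMap.mem_ker, map_sub, map_add, map_smul, hg1, hg2,
        LinearMap.smul_apply, LinearMap.add_apply, LinearMap.sub_apply]
      abel
    · simp only [SetLike.mem_coe, LinearMap.mem_ker, map_sub, map_add, map_smul, hg1, hg2,
        LinearMap.smul_apply, LinearMap.add_apply, LinearMap.sub_apply]
      abel
    · simp only [SetLike.mem_coe, LinearMap.mem_ker, map_sub, map_add, map_smul, hg1, hg2,
        LinearMap.smul_apply, LinearMap.add_apply, LinearMap.sub_apply]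
      abel
    · simp only [SetLike.mem_coe, LinearMap.mem_ker, map_sub, map_add, map_smul, hg1, hg2,
        LinearMap.smul_apply, LinearMap.add_apply, LinearMap.sub_apply]
      abel
    · simp only [SetLike.mem_coe, LinearMap.mem_ker, map_sub, map_add, map_smul, hg1, hg2,
        LinearMap.smul_apply, LinearMap.add_apply, LinearMap.sub_apply]
      abel
    · simp only [SetLike.mem_coe, LinearMap.mem_ker, map_sub, map_add, map_smul, hg1, hg2,
        LinearMap.smul_apply, LinearMap.add_apply, LinearMap.sub_apply]
      exact h9 m n n'
    · simp only [SetLike.mem_coe, LinearMap.mem_ker, map_sub, map_add, map_smul, hg1, hg2,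
        LinearMap.smul_apply, LinearMap.add_apply, LinearMap.sub_apply]
      exact h10 n m m'
    · simp only [SetLike.mem_coe, LinearMap.mem_ker, map_sub, map_add, map_smul, hg1, hg2,
        LinearMap.smul_apply, LinearMap.add_apply, LinearMap.sub_apply]
      exact h11 m m' n
    · simp only [SetLike.mem_coe, LinearMap.mem_ker, map_sub, map_add, map_smul, hg1, hg2,
        LinearMap.smul_apply, LinearMap.add_apply, LinearMap.sub_apply]
      exact h12 n n' m
    · simp only [SetLike.mem_coe, LinearMap.mem_ker, map_sub, map_add, map_smul, hg1, hg2,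
        LinearMap.smul_apply, LinearMap.add_apply, LinearMap.sub_apply]
      exact h13 m m' n
    · simp only [SetLike.mem_coe, LinearMap.mem_ker, map_sub, map_add, map_smul, hg1, hg2,
        LinearMap.smul_apply, LinearMap.add_apply, LinearMap.sub_apply]
      exact h14 n n' m
    · simp only [SetLike.mem_coe, LinearMap.mem_ker, map_sub, map_add, map_smul, hg1, hg2,
        LinearMap.smul_apply, LinearMap.add_apply, LinearMap.sub_apply]
      rw [h15]; abel
    · simp only [SetLike.mem_coe, LinearMap.mem_ker, map_sub, map_add, map_smul, hg1, hg2,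
        LinearMap.smul_apply, LinearMap.add_apply, LinearMap.sub_apply]
      rw [h16]; abel
    · simp only [SetLike.mem_coe, LinearMap.mem_ker, map_sub, map_add, map_smul, hg1, hg2,
        LinearMap.smul_apply, LinearMap.add_apply, LinearMap.sub_apply]
      rw [h17]; abel
    · simp only [SetLike.mem_coe, LinearMap.mem_ker, map_sub, map_add, map_smul, hg1, hg2,
        LinearMap.smul_apply, LinearMap.add_apply, LinearMap.sub_apply]
      rw [h18]; abel
  refine ⟨Submodule.liftQ _ φ hker, fun m n => ?_, fun n m => ?_⟩
  · exact (Submodule.liftQ_apply _ φ _).trans (hg1 m n)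
  · exact (Submodule.liftQ_apply _ φ _).trans (hg2 n m)

end Aux

/-- For Hom-Leibniz algebras `(M,α_M)`, `(N,α_N)` acting compatibly on each other, the maps
`ψ₁ : M∗N → M`, `ψ₁(m∗n) = m^n`, `ψ₁(n∗m) = ^n m` and `ψ₂ : M∗N → N`, `ψ₂(m∗n) = ^m n`,
`ψ₂(n∗m) = n^m` are (well-defined) homomorphisms of Hom-Leibniz algebras. -/
theorem psi_one_psi_two_homomorphisms {𝕜 M N : Type*} [Field 𝕜]
    [AddCommGroup M] [Module 𝕜 M] [AddCommGroup N] [Module 𝕜 N]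
    (brM : M →ₗ[𝕜] M →ₗ[𝕜] M) (αM : M →ₗ[𝕜] M) (hM : IsHomLeibniz brM αM)
    (brN : N →ₗ[𝕜] N →ₗ[𝕜] N) (αN : N →ₗ[𝕜] N) (hN : IsHomLeibniz brN αN)
    (ml : M →ₗ[𝕜] N →ₗ[𝕜] N) (mr : N →ₗ[𝕜] M →ₗ[𝕜] N)
    (nl : N →ₗ[𝕜] M →ₗ[𝕜] M) (nr : M →ₗ[𝕜] N →ₗ[𝕜] M)
    (hactM : IsHomLeibnizAction brM αM brN αN ml mr)
    (hactN : IsHomLeibnizAction brN αN brM αM nl nr)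
    (hcomp : CompatibleActions brM brN ml mr nl nr)
    (Br : HomTensor brM brN αM αN ml mr nl nr →ₗ[𝕜]
      HomTensor brM brN αM αN ml mr nl nr →ₗ[𝕜] HomTensor brM brN αM αN ml mr nl nr)
    (hBr1 : ∀ m n m' n', Br (t1 brM brN αM αN ml mr nl nr m n)
      (t1 brM brN αM αN ml mr nl nr m' n') = t1 brM brN αM αN ml mr nl nr (nr m n) (ml m' n'))
    (hBr2 : ∀ m n n' m', Br (t1 brM brN αM αN ml mr nl nr m n)
      (t2 brM brN αM αN ml mr nl nr n' m') = t1 brM brN αM αN ml mr nl nr (nr m n) (mr n' m'))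
    (hBr3 : ∀ n m m' n', Br (t2 brM brN αM αN ml mr nl nr n m)
      (t1 brM brN αM αN ml mr nl nr m' n') = t1 brM brN αM αN ml mr nl nr (nl n m) (ml m' n'))
    (hBr4 : ∀ n m n' m', Br (t2 brM brN αM αN ml mr nl nr n m)
      (t2 brM brN αM αN ml mr nl nr n' m') = t1 brM brN αM αN ml mr nl nr (nl n m) (mr n' m'))
    (αT : HomTensor brM brN αM αN ml mr nl nr →ₗ[𝕜] HomTensor brM brN αM αN ml mr nl nr)
    (hαT1 : ∀ m n, αT (t1 brM brN αM αN ml mr nl nr m n) =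
      t1 brM brN αM αN ml mr nl nr (αM m) (αN n))
    (hαT2 : ∀ n m, αT (t2 brM brN αM αN ml mr nl nr n m) =
      t2 brM brN αM αN ml mr nl nr (αN n) (αM m)) :
    (∃ ψ₁ : HomTensor brM brN αM αN ml mr nl nr →ₗ[𝕜] M,
      (∀ m n, ψ₁ (t1 brM brN αM αN ml mr nl nr m n) = nr m n) ∧
      (∀ n m, ψ₁ (t2 brM brN αM αN ml mr nl nr n m) = nl n m) ∧
      (∀ a b, ψ₁ (Br a b) = brM (ψ₁ a) (ψ₁ b)) ∧
      (∀ a, ψ₁ (αT a) = αM (ψ₁ a))) ∧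
    (∃ ψ₂ : HomTensor brM brN αM αN ml mr nl nr →ₗ[𝕜] N,
      (∀ m n, ψ₂ (t1 brM brN αM αN ml mr nl nr m n) = ml m n) ∧
      (∀ n m, ψ₂ (t2 brM brN αM αN ml mr nl nr n m) = mr n m) ∧
      (∀ a b, ψ₂ (Br a b) = brN (ψ₂ a) (ψ₂ b)) ∧
      (∀ a, ψ₂ (αT a) = αN (ψ₂ a))) := by
  obtain ⟨hM1, hM2, hM3, hM4, hM5, hM6, hM7, hM8⟩ := hactM
  obtain ⟨hN1, hN2, hN3, hN4, hN5, hN6, hN7, hN8⟩ := hactN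
  obtain ⟨hc1, hc2, hc3, hc4, hc5, hc6, hc7, hc8⟩ := hcomp
  constructor
  · obtain ⟨ψ, hψ1, hψ2⟩ := homTensor_lift brM brN αM αN ml mr nl nr nr nl
      (by intro m n n'; rw [hN1]; abel)
      (by intro n m m'; rw [hN4, hc2, hc2]; abel)
      (by intro m m' n; rw [hN5, hc1, hc4, hN6]; abel)
      (by intro n n' m; rw [hN2]; abel)
      (by intro m m' n; rw [hc3, hc4, hN6]; abel)
      (by intro n n' m; rw [hN3]; abel)
      (by intro m m' n n'; rw [hc3, hc1])
      (by intro m m' n n'; rw [hc4, hc1])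
      (by intro m m' n n'; rw [hc3, hc2])
      (by intro m m' n n'; rw [hc4, hc2])
    have key : LinearMap.compr₂ Br ψ = LinearMap.compl₁₂ brM ψ ψ := by
      apply homTensor_ext
      · intro m n
        apply homTensor_ext
        · intro m' n'
          simp only [LinearMap.compr₂_apply, LinearMap.compl₁₂_apply, hBr1, hψ1]
          exact hc3 _ _ _
        · intro n' m'
          simp only [LinearMap.compr₂_apply, LinearMap.compl₁₂_apply, hBr2, hψ1, hψ2]
          exact hc4 _ _ _
      · intro n m
        apply homTensor_ext
        · intro m' n'
          simp only [LinearMap.compr₂_apply, LinearMap.compl₁₂_apply, hBr3, hψ1, hψ2]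
          exact hc3 _ _ _
        · intro n' m'
          simp only [LinearMap.compr₂_apply, LinearMap.compl₁₂_apply, hBr4, hψ1, hψ2]
          exact hc4 _ _ _
    have key2 : ψ ∘ₗ αT = αM ∘ₗ ψ := by
      apply homTensor_ext
      · intro m n
        simp only [LinearMap.comp_apply, hαT1, hψ1]
        exact (hN8 n m).symm
      · intro n m
        simp only [LinearMap.comp_apply, hαT2, hψ2]
        exact (hN7 n m).symm
    refine ⟨ψ, hψ1, hψ2, fun a b => ?_, fun a => ?_⟩
    · have := LinearMap.congr_fun (LinearMap.congr_fun key a) b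
      simpa only [LinearMap.compr₂_apply, LinearMap.compl₁₂_apply] using this
    · have := LinearMap.congr_fun key2 a
      simpa only [LinearMap.comp_apply] using this
  · obtain ⟨ψ, hψ1, hψ2⟩ := homTensor_lift brM brN αM αN ml mr nl nr ml mr
      (by intro m n n'; rw [hM4, hc6, hc6]; abel)
      (by intro n m m'; rw [hM1]; abel)
      (by intro m m' n; rw [hM2]; abel)
      (by intro n n' m; rw [hM5, hc5, hc8, hM6]; abel)
      (by intro m m' n; rw [hM3]; abel)
      (by intro n n' m; rw [hc7, hc8, hM6]; abel)
      (by intro m m' n n'; rw [hc6, hc8])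
      (by intro m m' n n'; rw [hc6, hc7])
      (by intro m m' n n'; rw [hc5, hc8])
      (by intro m m' n n'; rw [hc5, hc7])
    have key : LinearMap.compr₂ Br ψ = LinearMap.compl₁₂ brN ψ ψ := by
      apply homTensor_ext
      · intro m n
        apply homTensor_ext
        · intro m' n'
          simp only [LinearMap.compr₂_apply, LinearMap.compl₁₂_apply, hBr1, hψ1]
          exact hc6 _ _ _
        · intro n' m'
          simp only [LinearMap.compr₂_apply, LinearMap.compl₁₂_apply, hBr2, hψ1, hψ2]
          exact hc6 _ _ _
      · intro n m
        apply homTensor_ext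
        · intro m' n'
          simp only [LinearMap.compr₂_apply, LinearMap.compl₁₂_apply, hBr3, hψ1, hψ2]
          exact hc5 _ _ _
        · intro n' m'
          simp only [LinearMap.compr₂_apply, LinearMap.compl₁₂_apply, hBr4, hψ1, hψ2]
          exact hc5 _ _ _
    have key2 : ψ ∘ₗ αT = αN ∘ₗ ψ := by
      apply homTensor_ext
      · intro m n
        simp only [LinearMap.comp_apply, hαT1, hψ1]
        exact (hM7 m n).symm
      · intro n m
        simp only [LinearMap.comp_apply, hαT2, hψ2]
        exact (hM8 m n).symm
    refine ⟨ψ, hψ1, hψ2, fun a b => ?_, fun a => ?_⟩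
    · have := LinearMap.congr_fun (LinearMap.congr_fun key a) b
      simpa only [LinearMap.compr₂_apply, LinearMap.compl₁₂_apply] using this
    · have := LinearMap.congr_fun key2 a
      simpa only [LinearMap.comp_apply] using this
end

section
/- For Hom-Leibniz algebras (M,α_M), (N,α_N) acting compatibly on each other, the kernels Ker(ψ₁) and Ker(ψ₂) of the homomorphisms ψ₁: M∗N → M and ψ₂: M∗N → N are contained in the center of the non-abelian tensor product (M∗N, α_{M∗N}). -/
section Aux

variable {𝕜 M N : Type*} [Field 𝕜] [AddCommGroup M] [Module 𝕜 M]
  [AddCommGroup N] [Module 𝕜 N]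
  (brM : M →ₗ[𝕜] M →ₗ[𝕜] M) (brN : N →ₗ[𝕜] N →ₗ[𝕜] N)
  (αM : M →ₗ[𝕜] M) (αN : N →ₗ[𝕜] N)
  (ml : M →ₗ[𝕜] N →ₗ[𝕜] N) (mr : N →ₗ[𝕜] M →ₗ[𝕜] N)
  (nl : N →ₗ[𝕜] M →ₗ[𝕜] M) (nr : M →ₗ[𝕜] N →ₗ[𝕜] M)

theorem relZero {z : ((M × N) ⊕ (N × M)) →₀ 𝕜}
    (hz : z ∈ tensorRel brM brN αM αN ml mr nl nr) :
    (Submodule.Quotient.mk z : HomTensor brM brN αM αN ml mr nl nr) = 0 :=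
  (Submodule.Quotient.mk_eq_zero _).2 (Submodule.subset_span hz)

theorem t1_add_left (m m' : M) (n : N) :
    t1 brM brN αM αN ml mr nl nr (m + m') n =
      t1 brM brN αM αN ml mr nl nr m n + t1 brM brN αM αN ml mr nl nr m' n := by
  have h := relZero brM brN αM αN ml mr nl nr
    (Or.inr <| Or.inr <| Or.inr <| Or.inr <| Or.inl ⟨m, m', n, rfl⟩)
  rw [Submodule.Quotient.mk_sub, Submodule.Quotient.mk_sub, sub_sub, sub_eq_zero] at h
  exact h

theorem t1_smul_left (c : 𝕜) (m : M) (n : N) :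
    t1 brM brN αM αN ml mr nl nr (c • m) n = c • t1 brM brN αM αN ml mr nl nr m n := by
  have h := relZero brM brN αM αN ml mr nl nr (Or.inl ⟨c, m, n, rfl⟩)
  rw [Submodule.Quotient.mk_sub, Submodule.Quotient.mk_smul, sub_eq_zero] at h
  exact h

theorem t1_add_right (m : M) (n n' : N) :
    t1 brM brN αM αN ml mr nl nr m (n + n') =
      t1 brM brN αM αN ml mr nl nr m n + t1 brM brN αM αN ml mr nl nr m n' := by
  have h := relZero brM brN αM αN ml mr nl nr
    (Or.inr <| Or.inr <| Or.inr <| Or.inr <| Or.inr <| Or.inl ⟨m, n, n', rfl⟩)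
  rw [Submodule.Quotient.mk_sub, Submodule.Quotient.mk_sub, sub_sub, sub_eq_zero] at h
  exact h

theorem t1_smul_right (c : 𝕜) (m : M) (n : N) :
    t1 brM brN αM αN ml mr nl nr m (c • n) = c • t1 brM brN αM αN ml mr nl nr m n := by
  have h := relZero brM brN αM αN ml mr nl nr (Or.inr <| Or.inl ⟨c, m, n, rfl⟩)
  rw [Submodule.Quotient.mk_sub, Submodule.Quotient.mk_smul, sub_eq_zero] at h
  exact h

theorem t2_add_left (n n' : N) (m : M) :
    t2 brM brN αM αN ml mr nl nr (n + n') m =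
      t2 brM brN αM αN ml mr nl nr n m + t2 brM brN αM αN ml mr nl nr n' m := by
  have h := relZero brM brN αM αN ml mr nl nr
    (Or.inr <| Or.inr <| Or.inr <| Or.inr <| Or.inr <| Or.inr <| Or.inl ⟨n, n', m, rfl⟩)
  rw [Submodule.Quotient.mk_sub, Submodule.Quotient.mk_sub, sub_sub, sub_eq_zero] at h
  exact h

theorem t2_smul_left (c : 𝕜) (n : N) (m : M) :
    t2 brM brN αM αN ml mr nl nr (c • n) m = c • t2 brM brN αM αN ml mr nl nr n m := by
  have h := relZero brM brN αM αN ml mr nl nr (Or.inr <| Or.inr <| Or.inl ⟨c, n, m, rfl⟩)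
  rw [Submodule.Quotient.mk_sub, Submodule.Quotient.mk_smul, sub_eq_zero] at h
  exact h

theorem t2_add_right (n : N) (m m' : M) :
    t2 brM brN αM αN ml mr nl nr n (m + m') =
      t2 brM brN αM αN ml mr nl nr n m + t2 brM brN αM αN ml mr nl nr n m' := by
  have h := relZero brM brN αM αN ml mr nl nr
    (Or.inr <| Or.inr <| Or.inr <| Or.inr <| Or.inr <| Or.inr <| Or.inr <|
      Or.inl ⟨n, m, m', rfl⟩)
  rw [Submodule.Quotient.mk_sub, Submodule.Quotient.mk_sub, sub_sub, sub_eq_zero] at h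
  exact h

theorem t2_smul_right (c : 𝕜) (n : N) (m : M) :
    t2 brM brN αM αN ml mr nl nr n (c • m) = c • t2 brM brN αM αN ml mr nl nr n m := by
  have h := relZero brM brN αM αN ml mr nl nr
    (Or.inr <| Or.inr <| Or.inr <| Or.inl ⟨c, n, m, rfl⟩)
  rw [Submodule.Quotient.mk_sub, Submodule.Quotient.mk_smul, sub_eq_zero] at h
  exact h

/-- The bilinear map `(m, n) ↦ m ∗ n`. -/
noncomputable def T1 : M →ₗ[𝕜] N →ₗ[𝕜] HomTensor brM brN αM αN ml mr nl nr :=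
  LinearMap.mk₂ 𝕜 (t1 brM brN αM αN ml mr nl nr)
    (fun m m' n => t1_add_left brM brN αM αN ml mr nl nr m m' n)
    (fun c m n => t1_smul_left brM brN αM αN ml mr nl nr c m n)
    (fun m n n' => t1_add_right brM brN αM αN ml mr nl nr m n n')
    (fun c m n => t1_smul_right brM brN αM αN ml mr nl nr c m n)

/-- The bilinear map `(n, m) ↦ n ∗ m`. -/
noncomputable def T2 : N →ₗ[𝕜] M →ₗ[𝕜] HomTensor brM brN αM αN ml mr nl nr :=
  LinearMap.mk₂ 𝕜 (t2 brM brN αM αN ml mr nl nr)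
    (fun n n' m => t2_add_left brM brN αM αN ml mr nl nr n n' m)
    (fun c n m => t2_smul_left brM brN αM αN ml mr nl nr c n m)
    (fun n m m' => t2_add_right brM brN αM αN ml mr nl nr n m m')
    (fun c n m => t2_smul_right brM brN αM αN ml mr nl nr c n m)

theorem rel15 (m m' : M) (n n' : N) :
    t1 brM brN αM αN ml mr nl nr (nr m n) (ml m' n') =
      t2 brM brN αM αN ml mr nl nr (ml m n) (nr m' n') := by
  have h := relZero brM brN αM αN ml mr nl nr
    (Or.inr <| Or.inr <| Or.inr <| Or.inr <| Or.inr <| Or.inr <| Or.inr <| Or.inr <|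
     Or.inr <| Or.inr <| Or.inr <| Or.inr <| Or.inr <| Or.inr <| Or.inl ⟨m, m', n, n', rfl⟩)
  rw [Submodule.Quotient.mk_sub, sub_eq_zero] at h
  exact h

theorem rel16 (m m' : M) (n n' : N) :
    t1 brM brN αM αN ml mr nl nr (nr m n) (mr n' m') =
      t2 brM brN αM αN ml mr nl nr (ml m n) (nl n' m') := by
  have h := relZero brM brN αM αN ml mr nl nr
    (Or.inr <| Or.inr <| Or.inr <| Or.inr <| Or.inr <| Or.inr <| Or.inr <| Or.inr <|
     Or.inr <| Or.inr <| Or.inr <| Or.inr <| Or.inr <| Or.inr <| Or.inr <|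
     Or.inl ⟨m, m', n, n', rfl⟩)
  rw [Submodule.Quotient.mk_sub, sub_eq_zero] at h
  exact h

theorem rel17 (m m' : M) (n n' : N) :
    t1 brM brN αM αN ml mr nl nr (nl n m) (ml m' n') =
      t2 brM brN αM αN ml mr nl nr (mr n m) (nr m' n') := by
  have h := relZero brM brN αM αN ml mr nl nr
    (Or.inr <| Or.inr <| Or.inr <| Or.inr <| Or.inr <| Or.inr <| Or.inr <| Or.inr <|
     Or.inr <| Or.inr <| Or.inr <| Or.inr <| Or.inr <| Or.inr <| Or.inr <| Or.inr <|
     Or.inl ⟨m, m', n, n', rfl⟩)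
  rw [Submodule.Quotient.mk_sub, sub_eq_zero] at h
  exact h

theorem rel18 (m m' : M) (n n' : N) :
    t1 brM brN αM αN ml mr nl nr (nl n m) (mr n' m') =
      t2 brM brN αM αN ml mr nl nr (mr n m) (nl n' m') := by
  have h := relZero brM brN αM αN ml mr nl nr
    (Or.inr <| Or.inr <| Or.inr <| Or.inr <| Or.inr <| Or.inr <| Or.inr <| Or.inr <|
     Or.inr <| Or.inr <| Or.inr <| Or.inr <| Or.inr <| Or.inr <| Or.inr <| Or.inr <|
     Or.inr ⟨m, m', n, n', rfl⟩)
  rw [Submodule.Quotient.mk_sub, sub_eq_zero] at h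
  exact h

theorem span_gen :
    Submodule.span 𝕜 {x : HomTensor brM brN αM αN ml mr nl nr |
      (∃ m n, x = t1 brM brN αM αN ml mr nl nr m n) ∨
      (∃ n m, x = t2 brM brN αM αN ml mr nl nr n m)} = ⊤ := by
  rw [eq_top_iff]
  rintro x -
  obtain ⟨f, rfl⟩ := Submodule.Quotient.mk_surjective _ x
  induction f using Finsupp.induction_linear with
  | zero =>
    rw [Submodule.Quotient.mk_zero]
    exact Submodule.zero_mem _
  | add f g hf hg =>
    rw [Submodule.Quotient.mk_add]
    exact Submodule.add_mem _ hf hg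
  | single a b =>
    cases a with
    | inl p =>
      have : Finsupp.single (Sum.inl p : (M × N) ⊕ (N × M)) b = b • g1 𝕜 p.1 p.2 := by
        simp [g1, Finsupp.smul_single]
      rw [this, Submodule.Quotient.mk_smul]
      exact Submodule.smul_mem _ _
        (Submodule.subset_span (Or.inl ⟨p.1, p.2, rfl⟩))
    | inr p =>
      have : Finsupp.single (Sum.inr p : (M × N) ⊕ (N × M)) b = b • g2 𝕜 p.1 p.2 := by
        simp [g2, Finsupp.smul_single]
      rw [this, Submodule.Quotient.mk_smul]
      exact Submodule.smul_mem _ _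
        (Submodule.subset_span (Or.inr ⟨p.1, p.2, rfl⟩))

end Aux

/-- For Hom-Leibniz algebras `(M,α_M)`, `(N,α_N)` acting compatibly on each other, the
kernels of `ψ₁ : M∗N → M` and `ψ₂ : M∗N → N` are contained in the center of the
non-abelian tensor product `(M∗N, α_{M∗N})`. -/
theorem ker_psi_central {𝕜 M N : Type*} [Field 𝕜]
    [AddCommGroup M] [Module 𝕜 M] [AddCommGroup N] [Module 𝕜 N]
    (brM : M →ₗ[𝕜] M →ₗ[𝕜] M) (αM : M →ₗ[𝕜] M) (hM : IsHomLeibniz brM αM)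
    (brN : N →ₗ[𝕜] N →ₗ[𝕜] N) (αN : N →ₗ[𝕜] N) (hN : IsHomLeibniz brN αN)
    (ml : M →ₗ[𝕜] N →ₗ[𝕜] N) (mr : N →ₗ[𝕜] M →ₗ[𝕜] N)
    (nl : N →ₗ[𝕜] M →ₗ[𝕜] M) (nr : M →ₗ[𝕜] N →ₗ[𝕜] M)
    (hactM : IsHomLeibnizAction brM αM brN αN ml mr)
    (hactN : IsHomLeibnizAction brN αN brM αM nl nr)
    (hcomp : CompatibleActions brM brN ml mr nl nr)
    (Br : HomTensor brM brN αM αN ml mr nl nr →ₗ[𝕜]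
      HomTensor brM brN αM αN ml mr nl nr →ₗ[𝕜] HomTensor brM brN αM αN ml mr nl nr)
    (hBr1 : ∀ m n m' n', Br (t1 brM brN αM αN ml mr nl nr m n)
      (t1 brM brN αM αN ml mr nl nr m' n') = t1 brM brN αM αN ml mr nl nr (nr m n) (ml m' n'))
    (hBr2 : ∀ m n n' m', Br (t1 brM brN αM αN ml mr nl nr m n)
      (t2 brM brN αM αN ml mr nl nr n' m') = t1 brM brN αM αN ml mr nl nr (nr m n) (mr n' m'))
    (hBr3 : ∀ n m m' n', Br (t2 brM brN αM αN ml mr nl nr n m)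
      (t1 brM brN αM αN ml mr nl nr m' n') = t1 brM brN αM αN ml mr nl nr (nl n m) (ml m' n'))
    (hBr4 : ∀ n m n' m', Br (t2 brM brN αM αN ml mr nl nr n m)
      (t2 brM brN αM αN ml mr nl nr n' m') = t1 brM brN αM αN ml mr nl nr (nl n m) (mr n' m'))
    (ψ₁ : HomTensor brM brN αM αN ml mr nl nr →ₗ[𝕜] M)
    (hψ₁1 : ∀ m n, ψ₁ (t1 brM brN αM αN ml mr nl nr m n) = nr m n)
    (hψ₁2 : ∀ n m, ψ₁ (t2 brM brN αM αN ml mr nl nr n m) = nl n m)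
    (ψ₂ : HomTensor brM brN αM αN ml mr nl nr →ₗ[𝕜] N)
    (hψ₂1 : ∀ m n, ψ₂ (t1 brM brN αM αN ml mr nl nr m n) = ml m n)
    (hψ₂2 : ∀ n m, ψ₂ (t2 brM brN αM αN ml mr nl nr n m) = mr n m) :
    (∀ z, ψ₁ z = 0 → ∀ w, Br z w = 0 ∧ Br w z = 0) ∧
    (∀ z, ψ₂ z = 0 → ∀ w, Br z w = 0 ∧ Br w z = 0) := by
  have hspan := span_gen brM brN αM αN ml mr nl nr
  have e1 : Br = ((T1 brM brN αM αN ml mr nl nr).comp ψ₁).compl₂ ψ₂ := by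
    apply LinearMap.ext_on hspan
    rintro x (⟨m, n, rfl⟩ | ⟨n, m, rfl⟩) <;>
    · apply LinearMap.ext_on hspan
      rintro y (⟨m', n', rfl⟩ | ⟨n', m', rfl⟩) <;>
        simp [LinearMap.compl₂_apply, LinearMap.comp_apply, hψ₁1, hψ₁2, hψ₂1, hψ₂2,
          hBr1, hBr2, hBr3, hBr4, T1, LinearMap.mk₂_apply]
  have e2 : Br = ((T2 brM brN αM αN ml mr nl nr).comp ψ₂).compl₂ ψ₁ := by
    apply LinearMap.ext_on hspan
    rintro x (⟨m, n, rfl⟩ | ⟨n, m, rfl⟩) <;>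
    · apply LinearMap.ext_on hspan
      rintro y (⟨m', n', rfl⟩ | ⟨n', m', rfl⟩) <;>
        simp [LinearMap.compl₂_apply, LinearMap.comp_apply, hψ₁1, hψ₁2, hψ₂1, hψ₂2,
          hBr1, hBr2, hBr3, hBr4, T2, LinearMap.mk₂_apply,
          rel15 brM brN αM αN ml mr nl nr, rel16 brM brN αM αN ml mr nl nr,
          rel17 brM brN αM αN ml mr nl nr, rel18 brM brN αM αN ml mr nl nr]
  constructor
  · intro z hz w
    constructor
    · rw [e1]; simp [LinearMap.compl₂_apply, LinearMap.comp_apply, hz]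
    · rw [e2]; simp [LinearMap.compl₂_apply, LinearMap.comp_apply, hz]
  · intro z hz w
    constructor
    · rw [e2]; simp [LinearMap.compl₂_apply, LinearMap.comp_apply, hz]
    · rw [e1]; simp [LinearMap.compl₂_apply, LinearMap.comp_apply, hz]
end

section
/- Let (A,α_A) be a multiplicative Hom-associative algebra. Then 𝕃^α(A) := (A⊗A)/Im(b₃), where b₃(a⊗b⊗c) = ab⊗α_A(c) − α_A(a)⊗bc + ca⊗α_A(b), carries a well-defined Hom-Leibniz algebra structure with bracket [a⊠b, a'⊠b'] = [a,b]⊠[a',b'] (where [x,y] = xy − yx) and endomorphism induced by α_A. -/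
open TensorProduct

/-- For a multiplicative Hom-associative algebra `(A,α_A)`, the quotient
`𝕃^α(A) = (A ⊗ A)/Im(b₃)`, with `b₃(a⊗b⊗c) = ab⊗α(c) − α(a)⊗bc + ca⊗α(b)`, carries a
well-defined Hom-Leibniz algebra structure with bracket
`[a⊠b, a'⊠b'] = [a,b]⊠[a',b']` (where `[x,y] = xy − yx`) and endomorphism induced by
`α_A`. -/
theorem hochschild_quotient_homLeibniz {𝕜 A : Type*} [Field 𝕜] [AddCommGroup A]
    [Module 𝕜 A]
    (mul : A →ₗ[𝕜] A →ₗ[𝕜] A) (α : A →ₗ[𝕜] A)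
    (hassoc : ∀ a b c, mul (α a) (mul b c) = mul (mul a b) (α c))
    (hα : ∀ a b, α (mul a b) = mul (α a) (α b)) :
    ∃ (Br : ((A ⊗[𝕜] A) ⧸ Submodule.span 𝕜
          {t : A ⊗[𝕜] A | ∃ a b c,
            t = mul a b ⊗ₜ α c - α a ⊗ₜ mul b c + mul c a ⊗ₜ α b}) →ₗ[𝕜]
        ((A ⊗[𝕜] A) ⧸ Submodule.span 𝕜
          {t : A ⊗[𝕜] A | ∃ a b c,
            t = mul a b ⊗ₜ α c - α a ⊗ₜ mul b c + mul c a ⊗ₜ α b}) →ₗ[𝕜]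
        ((A ⊗[𝕜] A) ⧸ Submodule.span 𝕜
          {t : A ⊗[𝕜] A | ∃ a b c,
            t = mul a b ⊗ₜ α c - α a ⊗ₜ mul b c + mul c a ⊗ₜ α b}))
      (ᾱ : ((A ⊗[𝕜] A) ⧸ Submodule.span 𝕜
          {t : A ⊗[𝕜] A | ∃ a b c,
            t = mul a b ⊗ₜ α c - α a ⊗ₜ mul b c + mul c a ⊗ₜ α b}) →ₗ[𝕜]
        ((A ⊗[𝕜] A) ⧸ Submodule.span 𝕜
          {t : A ⊗[𝕜] A | ∃ a b c,
            t = mul a b ⊗ₜ α c - α a ⊗ₜ mul b c + mul c a ⊗ₜ α b})),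
      (∀ a b a' b', Br (Submodule.Quotient.mk (a ⊗ₜ b)) (Submodule.Quotient.mk (a' ⊗ₜ b')) =
        Submodule.Quotient.mk ((mul a b - mul b a) ⊗ₜ (mul a' b' - mul b' a'))) ∧
      (∀ a b, ᾱ (Submodule.Quotient.mk (a ⊗ₜ b)) =
        Submodule.Quotient.mk (α a ⊗ₜ α b)) ∧
      (∀ u v w, Br (ᾱ u) (Br v w) = Br (Br u v) (ᾱ w) - Br (Br u w) (ᾱ v)) ∧
      (∀ u v, ᾱ (Br u v) = Br (ᾱ u) (ᾱ v)) := by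

  classical
  set N : Submodule 𝕜 (A ⊗[𝕜] A) := Submodule.span 𝕜
      {t : A ⊗[𝕜] A | ∃ a b c,
        t = mul a b ⊗ₜ α c - α a ⊗ₜ mul b c + mul c a ⊗ₜ α b} with hN
  -- the commutator map
  set ℓ : A ⊗[𝕜] A →ₗ[𝕜] A := TensorProduct.lift (mul - mul.flip) with hℓdef
  have hℓ : ∀ a b : A, ℓ (a ⊗ₜ b) = mul a b - mul b a := by
    intro a b; simp [hℓdef]
  have hker : N ≤ LinearMap.ker ℓ := by
    rw [hN, Submodule.span_le]
    rintro t ⟨a, b, c, rfl⟩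
    simp only [SetLike.mem_coe, LinearMap.mem_ker, map_add, map_sub, hℓ]
    rw [hassoc a b c, hassoc c a b, hassoc b c a]
    abel
  have hℓ0 : ∀ x ∈ N, ℓ x = 0 := fun x hx => hker hx
  -- the bilinear bracket on A ⊗ A with values in the quotient
  set B : (A ⊗[𝕜] A) →ₗ[𝕜] (A ⊗[𝕜] A) →ₗ[𝕜] ((A ⊗[𝕜] A) ⧸ N) :=
    (((TensorProduct.mk 𝕜 A A).compr₂ N.mkQ).compl₁₂ ℓ ℓ) with hBdef
  have hB : ∀ x y : A ⊗[𝕜] A, B x y = Submodule.Quotient.mk (ℓ x ⊗ₜ ℓ y) := by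
    intro x y; simp [hBdef]
  have h1 : N ≤ LinearMap.ker B := by
    intro x hx
    rw [LinearMap.mem_ker]
    ext y
    simp [hB, hℓ0 x hx]
  set D : ((A ⊗[𝕜] A) ⧸ N) →ₗ[𝕜] (A ⊗[𝕜] A) →ₗ[𝕜] ((A ⊗[𝕜] A) ⧸ N) :=
    Submodule.liftQ N B h1 with hDdef
  have h2 : N ≤ LinearMap.ker D.flip := by
    intro y hy
    rw [LinearMap.mem_ker]
    refine LinearMap.ext fun u => ?_
    obtain ⟨x, rfl⟩ := Submodule.Quotient.mk_surjective N u
    show D (Submodule.Quotient.mk x) y = _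
    rw [hDdef, Submodule.liftQ_apply, hB, hℓ0 y hy]
    simp
  have hmap : N ≤ Submodule.comap (TensorProduct.map α α) N := by
    rw [hN]
    refine Submodule.span_le.mpr ?_
    rintro t ⟨a, b, c, rfl⟩
    refine Submodule.subset_span ⟨α a, α b, α c, ?_⟩
    simp [hα]
  set Br := (Submodule.liftQ N D.flip h2).flip with hBrdef
  set Al := Submodule.mapQ N N (TensorProduct.map α α) hmap with hAldef
  have hBr : ∀ x y : A ⊗[𝕜] A,
      Br (Submodule.Quotient.mk x) (Submodule.Quotient.mk y)
        = Submodule.Quotient.mk (ℓ x ⊗ₜ ℓ y) := by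
    intro x y
    show Submodule.liftQ N D.flip h2 (Submodule.Quotient.mk y)
      (Submodule.Quotient.mk x) = _
    rw [Submodule.liftQ_apply, LinearMap.flip_apply, hDdef,
      Submodule.liftQ_apply, hB]
  have hA : ∀ x : A ⊗[𝕜] A,
      Al (Submodule.Quotient.mk x)
        = Submodule.Quotient.mk (TensorProduct.map α α x) := by
    intro x
    rw [hAldef, Submodule.mapQ_apply]
  have hcomm : ∀ x : A ⊗[𝕜] A, ℓ (TensorProduct.map α α x) = α (ℓ x) := by
    intro x
    have h : ℓ.comp (TensorProduct.map α α) = α.comp ℓ := by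
      apply TensorProduct.ext'
      intro a b
      simp [hℓ, hα]
    exact LinearMap.congr_fun h x
  refine ⟨Br, Al, ?_, ?_, ?_, ?_⟩
  · intro a b a' b'
    rw [hBr, hℓ, hℓ]
  · intro a b
    rw [hA]
    simp
  · intro u v w
    obtain ⟨z, rfl⟩ := Submodule.Quotient.mk_surjective N w
    obtain ⟨y, rfl⟩ := Submodule.Quotient.mk_surjective N v
    obtain ⟨x, rfl⟩ := Submodule.Quotient.mk_surjective N u
    simp only [hA, hBr, hℓ, hcomm]
    set X := ℓ x
    set Y := ℓ y
    set Z := ℓ z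
    rw [show (Submodule.Quotient.mk ((mul X Y - mul Y X) ⊗ₜ[𝕜] α Z) :
        (A ⊗[𝕜] A) ⧸ N) - Submodule.Quotient.mk ((mul X Z - mul Z X) ⊗ₜ[𝕜] α Y)
        = Submodule.Quotient.mk ((mul X Y - mul Y X) ⊗ₜ[𝕜] α Z
          - (mul X Z - mul Z X) ⊗ₜ[𝕜] α Y) from (Submodule.Quotient.mk_sub N).symm,
      Submodule.Quotient.eq]
    have hg1 : (mul X Z ⊗ₜ[𝕜] α Y - α X ⊗ₜ[𝕜] mul Z Y + mul Y X ⊗ₜ[𝕜] α Z) ∈ N :=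
      Submodule.subset_span ⟨X, Z, Y, rfl⟩
    have hg2 : (mul X Y ⊗ₜ[𝕜] α Z - α X ⊗ₜ[𝕜] mul Y Z + mul Z X ⊗ₜ[𝕜] α Y) ∈ N :=
      Submodule.subset_span ⟨X, Y, Z, rfl⟩
    have hmem := Submodule.sub_mem N hg1 hg2
    convert hmem using 1
    simp only [TensorProduct.tmul_sub, TensorProduct.sub_tmul]
    abel
  · intro u v
    obtain ⟨y, rfl⟩ := Submodule.Quotient.mk_surjective N v
    obtain ⟨x, rfl⟩ := Submodule.Quotient.mk_surjective N u
    rw [hBr, hA, hA, hA, hBr, hcomm, hcomm]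
    simp
end
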